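/- arXiv:1504.02828 — 3 statements merged into one kernel-verified Lean document; each statement's English description precedes it below -/
import Mathlib

section
/- Let R be a commutative ring and let x_1, …, x_e, c, β ∈ R. Then ∏_{i=1}^{e} (x_i + c + β·x_i·c) = Σ_{p=0}^{e} e_p(x_1,…,x_e) · Σ_{q=0}^{p} C(p,q) · β^q · c^{e−p+q}, where e_p denotes the p-th elementary symmetric polynomial and C(p,q) the binomial coefficient. -/
/-- For a commutative ring `R` and elements `x 1, …, x e, c, β ∈ R`,
`∏ i, (x i + c + β * x i * c) = ∑_{p=0}^{e} e_p(x) * ∑_{q=0}^{p} (p choose q) β^q c^(e-p+q)`,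
where `e_p` is the `p`-th elementary symmetric polynomial. -/
theorem stmt0 (R : Type*) [CommRing R] (e : ℕ) (x : Fin e → R) (c β : R) :
    ∏ i : Fin e, (x i + c + β * x i * c) =
      ∑ p ∈ Finset.range (e + 1),
        (∑ s ∈ Finset.univ.powersetCard p, ∏ i ∈ s, x i) *
          ∑ q ∈ Finset.range (p + 1),
            (p.choose q : R) * β ^ q * c ^ (e - p + q) := by
  have h1 : ∀ i : Fin e, x i + c + β * x i * c = x i * (1 + β * c) + c := fun i => by ring
  simp only [h1]
  rw [Finset.prod_add, Finset.sum_powerset]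
  simp only [Finset.card_univ, Fintype.card_fin]
  refine Finset.sum_congr rfl fun p hp => ?_
  have hp' : p ≤ e := Nat.lt_succ_iff.mp (Finset.mem_range.mp hp)
  have key : ∀ t ∈ Finset.powersetCard p (Finset.univ : Finset (Fin e)),
      (∏ i ∈ t, x i * (1 + β * c)) * ∏ i ∈ Finset.univ \ t, c =
        (∏ i ∈ t, x i) * ((1 + β * c) ^ p * c ^ (e - p)) := by
    intro t ht
    have hcard : t.card = p := (Finset.mem_powersetCard.mp ht).2
    rw [Finset.prod_mul_distrib, Finset.prod_const, Finset.prod_const,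
      Finset.card_sdiff_of_subset (Finset.subset_univ t), Finset.card_univ, Fintype.card_fin, hcard,
      mul_assoc]
  rw [Finset.sum_congr rfl key, ← Finset.sum_mul]
  congr 1
  rw [add_comm (1 : R) (β * c), add_pow, Finset.sum_mul]
  refine Finset.sum_congr rfl fun q hq => ?_
  have : e - p + q = q + (e - p) := Nat.add_comm _ _
  rw [this, pow_add, mul_pow]
  ring
end

section
/- Let e ≥ 1 and let m be an integer with 0 ≤ m ≤ e−1. In the field of fractions of the polynomial ring ℤ[β, z_1, …, z_e], one has Σ_{i=1}^{e} z_i^{e−1−m} · ∏_{j≠i}(1 + β z_j) / ∏_{j≠i}(z_i − z_j) = (−β)^m. -/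
open MvPolynomial

namespace Stmt1

variable (e : ℕ)

/-- The field of fractions of the polynomial ring `ℤ[β, z_1, …, z_e]`. -/
abbrev K (e : ℕ) := FractionRing (MvPolynomial (Option (Fin e)) ℤ)

/-- The variable `β` in the field of fractions. -/
noncomputable def β : K e :=
  algebraMap (MvPolynomial (Option (Fin e)) ℤ) (K e) (X none)

/-- The variables `z_1, …, z_e` in the field of fractions. -/
noncomputable def z (i : Fin e) : K e :=
  algebraMap (MvPolynomial (Option (Fin e)) ℤ) (K e) (X (some i))

/-- For `e ≥ 1` and `0 ≤ m ≤ e - 1`, in the field of fractions of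
`ℤ[β, z_1, …, z_e]` one has
`∑_{i=1}^{e} z_i^(e-1-m) ∏_{j≠i}(1 + β z_j) / ∏_{j≠i}(z_i - z_j) = (-β)^m`. -/
theorem stmt1 (e : ℕ) (he : 1 ≤ e) (m : ℕ) (hm : m ≤ e - 1) :
    ∑ i : Fin e,
        z e i ^ (e - 1 - m) * (∏ j ∈ Finset.univ.erase i, (1 + β e * z e j)) /
          ∏ j ∈ Finset.univ.erase i, (z e i - z e j) =
      (-β e) ^ m := by
  have halg : Function.Injective
      (algebraMap (MvPolynomial (Option (Fin e)) ℤ) (K e)) :=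
    IsFractionRing.injective _ _
  have hβ : β e ≠ 0 := by
    intro h
    rw [β, ← (algebraMap (MvPolynomial (Option (Fin e)) ℤ) (K e)).map_zero] at h
    exact MvPolynomial.X_ne_zero _ (halg h)
  have hnβ : (-β e) ≠ 0 := neg_ne_zero.mpr hβ
  have hz : Function.Injective (z e) := by
    intro i j h
    have := halg h
    have := MvPolynomial.X_injective this
    exact Option.some_injective _ this
  set x : K e := (-β e)⁻¹ with hxdef
  -- Lagrange interpolation of X^(e-1-m) at the nodes z_i, evaluated at x
  have hdeg : (Polynomial.X ^ (e - 1 - m) : Polynomial (K e)).degree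
      < (Finset.univ : Finset (Fin e)).card := by
    rw [Polynomial.degree_X_pow, Finset.card_univ, Fintype.card_fin]
    exact_mod_cast Nat.lt_of_le_of_lt (Nat.sub_le _ _)
      (Nat.lt_of_lt_of_le (Nat.sub_lt he one_pos) le_rfl)
  have hinj : Set.InjOn (z e) (Finset.univ : Finset (Fin e)) :=
    fun i _ j _ h => hz h
  have key := Lagrange.eq_interpolate (s := Finset.univ) (v := z e) hinj hdeg
  have keval := congrArg (Polynomial.eval x) key
  rw [Lagrange.interpolate_apply] at keval
  simp only [Polynomial.eval_finset_sum, Polynomial.eval_mul, Polynomial.eval_C,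
    Polynomial.eval_pow, Polynomial.eval_X, Lagrange.basis, Polynomial.eval_prod,
    Lagrange.basisDivisor, Polynomial.eval_sub] at keval
  -- keval : x ^ (e-1-m) = ∑ i, z_i^(e-1-m) * ∏_{j≠i} (z_i - z_j)⁻¹ * (x - z_j)
  have hxne : x ≠ 0 := inv_ne_zero hnβ
  have hcard : ∀ i : Fin e, (Finset.univ.erase i).card = e - 1 := by
    intro i
    rw [Finset.card_erase_of_mem (Finset.mem_univ i), Finset.card_univ, Fintype.card_fin]
  have hsum : ∑ i : Fin e, z e i ^ (e - 1 - m) *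
        ∏ j ∈ Finset.univ.erase i, (z e i - z e j)⁻¹ * (x - z e j)
      = x ^ (e - 1) * ∑ i : Fin e,
          z e i ^ (e - 1 - m) * (∏ j ∈ Finset.univ.erase i, (1 + β e * z e j)) /
            ∏ j ∈ Finset.univ.erase i, (z e i - z e j) := by
    rw [Finset.mul_sum]
    refine Finset.sum_congr rfl fun i _ => ?_
    have h1 : ∏ j ∈ Finset.univ.erase i, (x - z e j)
        = x ^ (e - 1) * ∏ j ∈ Finset.univ.erase i, (1 + β e * z e j) := by
      have : ∀ j ∈ Finset.univ.erase i, x - z e j = x * (1 + β e * z e j) := by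
        intro j _
        have hxb : x * β e = -1 := by
          rw [hxdef]
          field_simp
        rw [mul_add, mul_one, ← mul_assoc, hxb]
        ring
      rw [Finset.prod_congr rfl this, Finset.prod_mul_distrib, Finset.prod_const, hcard i]
    rw [Finset.prod_mul_distrib, h1, Finset.prod_inv_distrib, div_eq_mul_inv]
    ring
  rw [hsum] at keval
  -- So x^(e-1-m) = x^(e-1) * S with S the goal's LHS
  set S := ∑ i : Fin e,
      z e i ^ (e - 1 - m) * (∏ j ∈ Finset.univ.erase i, (1 + β e * z e j)) /
        ∏ j ∈ Finset.univ.erase i, (z e i - z e j) with hS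
  have hsplit : x ^ (e - 1) = x ^ (e - 1 - m) * x ^ m := by
    rw [← pow_add]
    congr 1
    omega
  rw [hsplit, mul_assoc] at keval
  have h1 : x ^ m * S = 1 := by
    have h2 : x ^ (e - 1 - m) * 1 = x ^ (e - 1 - m) * (x ^ m * S) := by
      rw [mul_one]; exact keval
    exact (mul_left_cancel₀ (pow_ne_zero _ hxne) h2).symm
  have hSval : S = (x ^ m)⁻¹ := eq_inv_of_mul_eq_one_right h1
  rw [hSval, ← inv_pow, hxdef, inv_inv]

end Stmt1
end

section
/- Let A be a commutative ring and R := A[[β]] the power series ring in β (so R is β-adically complete). Let c_0 = 1, c_1, …, c_e ∈ R and set c(u) := Σ_{i=0}^{e} c_i u^i. Since c(−u) has constant term 1, it is invertible in R[[u]]; write T(u) = Σ_{j≥0} T_j u^j := c(β) · c(−u)^{−1} ∈ R[[u]], and for m ∈ ℤ define S_m := Σ_{k ≥ max(0,−m)} (−β)^k T_{m+k}, a β-adically convergent sum in R. Then (S_m)_{m∈ℤ} is the unique family of elements of R satisfying: (i) S_m = (−β)^{−m} for all m ≤ 0, and (ii) Σ_{i=0}^{e} (−1)^i c_i S_{m−i}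 = 0 for all m ≥ 1. Equivalently, the Segre series Σ_{m∈ℤ} S_m u^m equals (1 + βu^{−1})^{−1} · c(β)/c(−u), where (1 + βu^{−1})^{−1} is expanded as Σ_{i≥0} (−β)^i u^{−i}. -/
open PowerSeries

/-- Let `A` be a commutative ring and `R := A⟦β⟧` (here `β` is the power
series variable `X`).  Let `c 0 = 1, c 1, …, c e ∈ R` and let `T = Σ_j T_j u^j ∈ R⟦u⟧` be
determined by `c(-u) * T(u) = c(β)` (i.e. `T = c(β)/c(-u)`, where `c(u) = Σ_i c_i u^i`).
For `m ∈ ℤ` let `S m := Σ_{k ≥ max(0,-m)} (-β)^k T_{m+k}` (a β-adically convergent sum,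
written out coefficientwise).  Then `(S m)_{m ∈ ℤ}` is the unique family with
(i) `S m = (-β)^{-m}` for `m ≤ 0` and (ii) `Σ_{i=0}^{e} (-1)^i c_i S_{m-i} = 0` for `m ≥ 1`. -/
theorem stmt2 (A : Type*) [CommRing A] (e : ℕ) (c : ℕ → PowerSeries A) (hc0 : c 0 = 1)
    (T : PowerSeries (PowerSeries A))
    (hT : (∑ i ∈ Finset.range (e + 1),
              PowerSeries.C (c i) * (-PowerSeries.X) ^ i) * T =
          PowerSeries.C
            (∑ i ∈ Finset.range (e + 1), c i * PowerSeries.X ^ i))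
    (S : ℤ → PowerSeries A)
    (hS : ∀ m : ℤ, S m = PowerSeries.mk fun n =>
        ∑ k ∈ Finset.range (n + 1),
          (-1 : A) ^ k *
            (if 0 ≤ m + (k : ℤ) then
                PowerSeries.coeff (n - k)
                  (PowerSeries.coeff (m + (k : ℤ)).toNat T)
              else 0)) :
    ((∀ m : ℤ, m ≤ 0 → S m = (-PowerSeries.X) ^ (-m).toNat) ∧
      (∀ m : ℤ, 1 ≤ m →
        ∑ i ∈ Finset.range (e + 1), (-1 : PowerSeries A) ^ i * c i * S (m - i) = 0)) ∧
    ∀ S' : ℤ → PowerSeries A,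
      ((∀ m : ℤ, m ≤ 0 → S' m = (-PowerSeries.X) ^ (-m).toNat) ∧
        (∀ m : ℤ, 1 ≤ m →
          ∑ i ∈ Finset.range (e + 1), (-1 : PowerSeries A) ^ i * c i * S' (m - i) = 0)) →
      S' = S := by
  classical
  -- the coefficient recurrence coming from hT
  have hrec : ∀ j : ℕ, ∑ i ∈ Finset.range (e + 1),
        (-1 : PowerSeries A) ^ i * c i *
          (if i ≤ j then PowerSeries.coeff (j - i) T else 0)
      = if j = 0 then ∑ i ∈ Finset.range (e + 1), c i * PowerSeries.X ^ i else 0 := by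
    intro j
    have h := congrArg (PowerSeries.coeff j) hT
    rw [PowerSeries.coeff_C, Finset.sum_mul, map_sum] at h
    rw [← h]
    apply Finset.sum_congr rfl
    intro i _
    have h2 : PowerSeries.C (c i) * (-PowerSeries.X) ^ i * T
        = T * PowerSeries.X ^ i * PowerSeries.C ((-1) ^ i * c i) := by
      rw [map_mul, map_pow, map_neg, map_one]
      ring
    rw [h2, mul_comm (T * PowerSeries.X ^ i), PowerSeries.coeff_C_mul,
      PowerSeries.coeff_mul_X_pow', mul_assoc, mul_ite, mul_zero]
  -- the one-step identity
  have step : ∀ q : ℤ, S q = (if 0 ≤ q then PowerSeries.coeff q.toNat T else 0)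
      + (-PowerSeries.X) * S (q + 1) := by
    intro q
    ext n
    rw [hS q, hS (q + 1), PowerSeries.coeff_mk, map_add]
    rcases n with _ | n
    · rw [Finset.sum_range_one]
      simp [PowerSeries.coeff_zero_eq_constantCoeff, apply_ite (PowerSeries.constantCoeff)]
    · rw [Finset.sum_range_succ']
      have h1 : ∀ k ∈ Finset.range (n + 1),
          (-1 : A) ^ (k + 1) *
            (if 0 ≤ q + ((k + 1 : ℕ) : ℤ) then
                PowerSeries.coeff (n + 1 - (k + 1))
                  (PowerSeries.coeff (q + ((k + 1 : ℕ) : ℤ)).toNat T)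
              else 0)
          = -((-1 : A) ^ k *
            (if 0 ≤ q + 1 + (k : ℤ) then
                PowerSeries.coeff (n - k)
                  (PowerSeries.coeff (q + 1 + (k : ℤ)).toNat T)
              else 0)) := by
        intro k _
        have e1 : q + ((k + 1 : ℕ) : ℤ) = q + 1 + (k : ℤ) := by push_cast; ring
        have e2 : n + 1 - (k + 1) = n - k := by omega
        rw [e1, e2, pow_succ]
        ring
      rw [Finset.sum_congr rfl h1]
      have h3 : (PowerSeries.coeff (n + 1)) ((-PowerSeries.X) * PowerSeries.mk fun b =>
          ∑ k ∈ Finset.range (b + 1), (-1 : A) ^ k *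
            (if 0 ≤ q + 1 + (k : ℤ) then
                PowerSeries.coeff (b - k)
                  (PowerSeries.coeff (q + 1 + (k : ℤ)).toNat T)
              else 0)) = -∑ k ∈ Finset.range (n + 1), (-1 : A) ^ k *
            (if 0 ≤ q + 1 + (k : ℤ) then
                PowerSeries.coeff (n - k)
                  (PowerSeries.coeff (q + 1 + (k : ℤ)).toNat T)
              else 0) := by
        rw [neg_mul, map_neg, PowerSeries.coeff_succ_X_mul, PowerSeries.coeff_mk]
      rw [h3, Finset.sum_neg_distrib]
      simp [apply_ite (PowerSeries.coeff (n + 1))]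
      ring
  -- decomposition of the combination W m
  have Wdec : ∀ m : ℤ,
      (∑ i ∈ Finset.range (e + 1), (-1 : PowerSeries A) ^ i * c i * S (m - i))
      = (∑ i ∈ Finset.range (e + 1), (-1 : PowerSeries A) ^ i * c i *
          (if 0 ≤ m - (i : ℤ) then PowerSeries.coeff (m - i).toNat T else 0))
        + (-PowerSeries.X) *
          ∑ i ∈ Finset.range (e + 1), (-1 : PowerSeries A) ^ i * c i * S (m + 1 - i) := by
    intro m
    rw [Finset.mul_sum, ← Finset.sum_add_distrib]
    apply Finset.sum_congr rfl
    intro i _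
    rw [step (m - i)]
    have e1 : m - (i : ℤ) + 1 = m + 1 - i := by ring
    rw [e1]
    ring
  -- for m ≥ 1 the first sum in Wdec vanishes
  have Wstep : ∀ m : ℤ, 1 ≤ m →
      (∑ i ∈ Finset.range (e + 1), (-1 : PowerSeries A) ^ i * c i * S (m - i))
      = (-PowerSeries.X) *
          ∑ i ∈ Finset.range (e + 1), (-1 : PowerSeries A) ^ i * c i * S (m + 1 - i) := by
    intro m hm
    rw [Wdec m]
    have h0 : (∑ i ∈ Finset.range (e + 1), (-1 : PowerSeries A) ^ i * c i *
        (if 0 ≤ m - (i : ℤ) then PowerSeries.coeff (m - i).toNat T else 0)) = 0 := by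
      have h := hrec m.toNat
      rw [if_neg (by omega)] at h
      refine Eq.trans ?_ h
      apply Finset.sum_congr rfl
      intro i _
      by_cases hi : 0 ≤ m - (i : ℤ)
      · rw [if_pos hi, if_pos (by omega : i ≤ m.toNat)]
        have e2 : (m - (i : ℤ)).toNat = m.toNat - i := by omega
        rw [e2]
      · rw [if_neg hi, if_neg (by omega)]
    rw [h0, zero_add]
  -- iterate Wstep
  have Wpow : ∀ N : ℕ, ∀ m : ℤ, 1 ≤ m →
      (∑ i ∈ Finset.range (e + 1), (-1 : PowerSeries A) ^ i * c i * S (m - i))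
      = (-PowerSeries.X) ^ N *
          ∑ i ∈ Finset.range (e + 1), (-1 : PowerSeries A) ^ i * c i * S (m + N - i) := by
    intro N
    induction N with
    | zero => intro m hm; simp
    | succ N ih =>
      intro m hm
      rw [Wstep m hm, ih (m + 1) (by omega)]
      have e1 : m + 1 + (N : ℤ) = m + ((N : ℕ) + 1 : ℕ) := by push_cast; ring
      rw [e1, pow_succ]
      ring
  -- hence W m = 0 for m ≥ 1
  have Wzero : ∀ m : ℤ, 1 ≤ m →
      (∑ i ∈ Finset.range (e + 1), (-1 : PowerSeries A) ^ i * c i * S (m - i)) = 0 := by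
    intro m hm
    ext n
    rw [map_zero, Wpow (n + 1) m hm]
    have h2 : (-PowerSeries.X : PowerSeries A) ^ (n + 1) *
        (∑ i ∈ Finset.range (e + 1), (-1 : PowerSeries A) ^ i * c i * S (m + (n + 1 : ℕ) - i))
        = ((∑ i ∈ Finset.range (e + 1), (-1 : PowerSeries A) ^ i * c i * S (m + (n + 1 : ℕ) - i))
            * (-1) ^ (n + 1)) * PowerSeries.X ^ (n + 1) := by
      ring
    rw [h2, PowerSeries.coeff_mul_X_pow', if_neg (by omega)]
  -- S (-p) = (-X)^p * S 0
  have Sneg : ∀ p : ℕ, S (-(p : ℤ)) = (-PowerSeries.X) ^ p * S 0 := by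
    intro p
    induction p with
    | zero => simp
    | succ p ih =>
      rw [step (-((p : ℕ) + 1 : ℕ) : ℤ), if_neg (by push_cast; omega)]
      have e1 : (-(((p : ℕ) + 1 : ℕ) : ℤ) + 1) = -(p : ℤ) := by push_cast; ring
      rw [e1, ih, zero_add, pow_succ]
      ring
  -- S 0 = 1
  have hconst : PowerSeries.constantCoeff
      (∑ i ∈ Finset.range (e + 1), c i * PowerSeries.X ^ i) = 1 := by
    rw [map_sum, Finset.sum_eq_single 0]
    · simp [hc0]
    · intro i _ hi
      rw [map_mul, map_pow, PowerSeries.constantCoeff_X, zero_pow hi, mul_zero]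
    · simp
  have hu : IsUnit (∑ i ∈ Finset.range (e + 1), c i * PowerSeries.X ^ i) := by
    rw [PowerSeries.isUnit_iff_constantCoeff, hconst]
    exact isUnit_one
  have ht0 : PowerSeries.coeff 0 T
      = ∑ i ∈ Finset.range (e + 1), c i * PowerSeries.X ^ i := by
    have h := hrec 0
    rw [if_pos rfl] at h
    rw [← h, Finset.sum_eq_single 0]
    · simp [hc0]
    · intro i _ hi
      rw [if_neg (by omega), mul_zero]
    · simp
  have hS0 : S 0 = 1 := by
    apply hu.mul_left_cancel
    rw [mul_one]
    have key : (∑ i ∈ Finset.range (e + 1), c i * PowerSeries.X ^ i) * S 0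
        = ∑ i ∈ Finset.range (e + 1), (-1 : PowerSeries A) ^ i * c i * S ((0 : ℤ) - i) := by
      rw [Finset.sum_mul]
      apply Finset.sum_congr rfl
      intro i _
      have e1 : ((0 : ℤ) - i) = -(i : ℤ) := by ring
      rw [e1, Sneg i]
      have e2 : (-1 : PowerSeries A) ^ i * (-PowerSeries.X) ^ i = PowerSeries.X ^ i := by
        rw [← mul_pow]; simp
      rw [← e2]
      ring
    rw [key, Wdec 0]
    have e0 : ∀ i : ℕ, (0 : ℤ) + 1 - (i : ℤ) = 1 - (i : ℤ) := fun i => by ring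
    simp only [e0]
    rw [Wzero 1 le_rfl, mul_zero, add_zero]
    rw [Finset.sum_eq_single 0]
    · simp [hc0, ht0]
    · intro i _ hi
      rw [if_neg (by omega), mul_zero]
    · simp
  have part1i : ∀ m : ℤ, m ≤ 0 → S m = (-PowerSeries.X) ^ (-m).toNat := by
    intro m hm
    have h := Sneg (-m).toNat
    rw [hS0, mul_one] at h
    rw [← h]
    have e1 : m = -((-m).toNat : ℤ) := by omega
    exact congrArg S e1
  refine ⟨⟨part1i, Wzero⟩, ?_⟩
  rintro S' ⟨h1', h2'⟩
  have key : ∀ N : ℕ, ∀ m : ℤ, m ≤ (N : ℤ) → S' m = S m := by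
    intro N
    induction N with
    | zero =>
      intro m hm
      have hm0 : m ≤ 0 := by exact_mod_cast hm
      rw [h1' m hm0, ← part1i m hm0]
    | succ N ih =>
      intro m hm
      rcases le_or_gt m (N : ℤ) with h | h
      · exact ih m h
      · have hm1 : 1 ≤ m := by omega
        have hA := Wzero m hm1
        have hB := h2' m hm1
        rw [Finset.sum_range_succ'] at hA hB
        have hsame : ∀ i ∈ Finset.range e,
            (-1 : PowerSeries A) ^ (i + 1) * c (i + 1) * S' (m - ((i + 1 : ℕ) : ℤ))
            = (-1 : PowerSeries A) ^ (i + 1) * c (i + 1) * S (m - ((i + 1 : ℕ) : ℤ)) := by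
          intro i _
          rw [ih (m - ((i + 1 : ℕ) : ℤ)) (by push_cast; omega)]
        rw [Finset.sum_congr rfl hsame] at hB
        simp only [pow_zero, one_mul, hc0, Nat.cast_zero, sub_zero] at hA hB
        exact add_left_cancel (hB.trans hA.symm)
  funext m
  exact key m.toNat m (Int.self_le_toNat m)
end
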